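/- Define the discrete iterated kernels by K_0 = K and K_n(t,s) = Σ_{η=s+1}^{t-1} K(t,η) K_{n-1}(η,s) for n ≥ 1, and the discrete resolvent kernel Γ(λ;t,s) = Σ_{ℓ=0}^{t-s} K_ℓ(t,s) λ^ℓ. Then for every λ ∈ ℝ the function φ(t) = λ Σ_{η=a}^{t-1} Γ(λ;t,η) f(η) + f(t) is the unique solution of the discrete Volterra equation φ(t) = λ Σ_{η=a}^{t-1} K(t,η) φ(η) + f(t) for integers a ≤ t ≤ b. -/

import Mathlib

open Finset

/-- The discrete iterated kernels: `K₀ = K` and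
`Kₙ(t,s) = Σ_{η=s+1}^{t-1} K(t,η) K_{n-1}(η,s)` for `n ≥ 1`. -/
noncomputable def iterKZ (K : ℤ → ℤ → ℝ) : ℕ → ℤ → ℤ → ℝ
  | 0 => K
  | n + 1 => fun t s => ∑ η ∈ Finset.Ioo s t, K t η * iterKZ K n η s

/-- The discrete resolvent kernel `Γ(λ;t,s) = Σ_{ℓ=0}^{t-s} K_ℓ(t,s) λ^ℓ`. -/
noncomputable def resolventKerZ (K : ℤ → ℤ → ℝ) (lam : ℝ) (t s : ℤ) : ℝ :=
  ∑ ℓ ∈ Finset.range ((t - s).toNat + 1), iterKZ K ℓ t s * lam ^ ℓ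

lemma iterK_vanish (K : ℤ → ℤ → ℝ) :
    ∀ n : ℕ, ∀ t s : ℤ, t - s ≤ (n : ℤ) + 1 → iterKZ K (n + 1) t s = 0 := by
  intro n
  induction n with
  | zero =>
    intro t s h
    have he : Finset.Ioo s t = ∅ := by
      apply Finset.eq_empty_of_forall_notMem
      intro x hx
      simp only [Finset.mem_Ioo] at hx
      omega
    simp [iterKZ, he]
  | succ n ih =>
    intro t s h
    show (∑ η ∈ Finset.Ioo s t, K t η * iterKZ K (n + 1) η s) = 0
    apply Finset.sum_eq_zero
    intro η hη
    simp only [Finset.mem_Ioo] at hη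
    rw [ih η s (by omega)]
    ring

lemma resolvent_id (K : ℤ → ℤ → ℝ) (lam : ℝ) {t s : ℤ} (h : s < t) :
    resolventKerZ K lam t s =
      K t s + lam * ∑ η ∈ Finset.Ioo s t, K t η * resolventKerZ K lam η s := by
  unfold resolventKerZ
  rw [Finset.sum_range_succ']
  have h0 : iterKZ K 0 t s * lam ^ 0 = K t s := by simp [iterKZ]
  rw [h0, add_comm]
  congr 1
  have hstep : ∀ ℓ : ℕ, iterKZ K (ℓ + 1) t s =
      ∑ η ∈ Finset.Ioo s t, K t η * iterKZ K ℓ η s := fun ℓ => rfl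
  simp only [hstep, Finset.sum_mul]
  rw [Finset.sum_comm, Finset.mul_sum]
  apply Finset.sum_congr rfl
  intro η hη
  simp only [Finset.mem_Ioo] at hη
  have hsub : Finset.range ((η - s).toNat + 1) ⊆ Finset.range ((t - s).toNat) := by
    apply Finset.range_subset_range.mpr
    omega
  rw [← Finset.sum_subset hsub ?_]
  · simp only [Finset.mul_sum]
    apply Finset.sum_congr rfl
    intro ℓ _
    rw [pow_succ]
    ring
  · intro ℓ _ hℓ
    simp only [Finset.mem_range, not_lt] at hℓ
    obtain ⟨m, rfl⟩ : ∃ m, ℓ = m + 1 := ⟨ℓ - 1, by omega⟩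
    rw [iterK_vanish K m η s (by omega)]
    ring

/-- the resolvent formula satisfies the Volterra equation (key computation). -/
lemma resolvent_eq (a : ℤ) (K : ℤ → ℤ → ℝ) (f : ℤ → ℝ) (lam : ℝ)
    (t : ℤ) (_ha : a ≤ t) :
    (∑ η ∈ Finset.Ico a t, resolventKerZ K lam t η * f η) =
      ∑ η ∈ Finset.Ico a t,
        K t η * (lam * (∑ ζ ∈ Finset.Ico a η, resolventKerZ K lam η ζ * f ζ) + f η) := by
  have hL : ∀ η ∈ Finset.Ico a t, resolventKerZ K lam t η * f η =
      K t η * f η + ∑ ζ ∈ Finset.Ioo η t, lam * (K t ζ * resolventKerZ K lam ζ η * f η) := by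
    intro η hη
    simp only [Finset.mem_Ico] at hη
    rw [resolvent_id K lam hη.2, add_mul]
    congr 1
    rw [Finset.mul_sum, Finset.sum_mul]
    apply Finset.sum_congr rfl
    intro ζ _
    ring
  have hR : ∀ η ∈ Finset.Ico a t,
      K t η * (lam * (∑ ζ ∈ Finset.Ico a η, resolventKerZ K lam η ζ * f ζ) + f η) =
      K t η * f η + ∑ ζ ∈ Finset.Ico a η, lam * (K t η * resolventKerZ K lam η ζ * f ζ) := by
    intro η _
    rw [Finset.mul_sum]
    rw [mul_add, add_comm]
    congr 1
    rw [Finset.mul_sum]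
    apply Finset.sum_congr rfl
    intro ζ _
    ring
  rw [Finset.sum_congr rfl hL, Finset.sum_congr rfl hR, Finset.sum_add_distrib,
    Finset.sum_add_distrib]
  congr 1
  -- swap the order of summation
  apply Finset.sum_comm'
  intro x y
  simp only [Finset.mem_Ico, Finset.mem_Ioo]
  omega

/-- **Solution of the discrete Volterra equation via the resolvent kernel**
(case `T = ℤ`, where `σ(s) = s+1` and the Δ-integral from `a` to `t` is
`Σ_{η=a}^{t-1}`): for every `λ ∈ ℝ`, `φ(t) = λ Σ_{η=a}^{t-1} Γ(λ;t,η) f(η) + f(t)`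
is the unique solution of `φ(t) = λ Σ_{η=a}^{t-1} K(t,η) φ(η) + f(t)` for integers
`a ≤ t ≤ b`. -/
theorem discrete_resolvent_gives_unique_solution
    (a b : ℤ) (hab : a < b) (K : ℤ → ℤ → ℝ) (f : ℤ → ℝ) (lam : ℝ) :
    (∀ t : ℤ, a ≤ t → t ≤ b →
      (lam * (∑ η ∈ Finset.Ico a t, resolventKerZ K lam t η * f η) + f t) =
        lam * (∑ η ∈ Finset.Ico a t,
          K t η * (lam * (∑ ζ ∈ Finset.Ico a η, resolventKerZ K lam η ζ * f ζ) + f η)) +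
          f t) ∧
    ∀ ψ : ℤ → ℝ,
      (∀ t : ℤ, a ≤ t → t ≤ b →
        ψ t = lam * (∑ η ∈ Finset.Ico a t, K t η * ψ η) + f t) →
      ∀ t : ℤ, a ≤ t → t ≤ b →
        ψ t = lam * (∑ η ∈ Finset.Ico a t, resolventKerZ K lam t η * f η) + f t := by
  constructor
  · intro t ha hb
    rw [resolvent_eq a K f lam t ha]
  · intro ψ hψ
    set φ : ℤ → ℝ := fun t =>
      lam * (∑ η ∈ Finset.Ico a t, resolventKerZ K lam t η * f η) + f t with hφ
    have key : ∀ n : ℕ, ∀ t : ℤ, a ≤ t → t ≤ b → (t - a).toNat ≤ n → ψ t = φ t := by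
      intro n
      induction n with
      | zero =>
        intro t ha hb hn
        have : t = a := by omega
        subst this
        rw [hψ t le_rfl hb]
        simp [hφ]
      | succ n ih =>
        intro t ha hb hn
        rw [hψ t ha hb]
        have hsum : (∑ η ∈ Finset.Ico a t, K t η * ψ η) =
            ∑ η ∈ Finset.Ico a t, K t η * φ η := by
          apply Finset.sum_congr rfl
          intro η hη
          simp only [Finset.mem_Ico] at hη
          rw [ih η hη.1 (by omega) (by omega)]
        rw [hsum]
        simp only [hφ]
        rw [← resolvent_eq a K f lam t ha]
    intro t ha hb
    exact key (t - a).toNat t ha hb le_rfl
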